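/- arXiv:1603.03639 — 6 statements merged into one kernel-verified Lean document; each statement's English description precedes it below -/
import Mathlib

section
/- Let $u, v, \tilde v, u', v', \tilde v' \in \mathbb{C}$ with $u \neq -1$ and $\bar{u}' \neq -1$ (e.g. $|u|<1$, $|u'|<1$). Define the $2\times 2$ matrices $M = \begin{pmatrix} u & v \\ \tilde v & \tilde v v/(1+u)\end{pmatrix}$ and $M' = \begin{pmatrix} u' & v' \\ \tilde v' & \tilde v' v'/(1+u')\end{pmatrix}$. Then $\det\big(I_2 - M (M')^*\big) = 1 - u\bar{u}' - v\bar{v}' - \tilde v \bar{\tilde v}'$. -/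
open Matrix ComplexConjugate

theorem mok_embedding_isometry (u v tv u' v' tv' : ℂ)
    (hu : u ≠ -1) (hu' : conj u' ≠ -1) :
    (1 - (!![u, v; tv, tv * v / (1 + u)]) * (!![u', v'; tv', tv' * v' / (1 + u')])ᴴ).det
      = 1 - u * conj u' - v * conj v' - tv * conj tv' := by
  have h1 : (1 : ℂ) + u ≠ 0 := by
    intro h; apply hu; linear_combination h
  have h2 : (1 : ℂ) + conj u' ≠ 0 := by
    intro h; apply hu'; linear_combination h
  simp only [conjTranspose_eq_transpose_of_trivial, Matrix.det_fin_two, Matrix.sub_apply,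
    Matrix.one_apply, Matrix.mul_apply, Fin.sum_univ_two, Matrix.map_apply,
    Matrix.transpose_apply, Matrix.cons_val', Matrix.cons_val_zero, Matrix.cons_val_one,
    Matrix.head_cons, Matrix.head_fin_const, Matrix.empty_val', Matrix.cons_val_fin_one]
  simp only [conjTranspose_apply, Matrix.cons_val_zero, Matrix.cons_val_one, Matrix.head_cons]
  simp only [Matrix.of_apply, Matrix.cons_val', Matrix.cons_val_zero, Matrix.cons_val_one,
    Matrix.head_cons, Matrix.empty_val', Matrix.cons_val_fin_one, Complex.star_def, if_true,
    one_ne_zero, zero_ne_one, if_false, map_mul, map_inv₀, map_add, map_one, map_div₀]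
  field_simp
  ring
end

section
/- Let $u, v, \tilde v \in \mathbb{C}$ with $|u| < 1$, and let $M = \begin{pmatrix} u & v \\ \tilde v & \tilde v v/(1+u)\end{pmatrix}$. Then $I_2 - M M^*$ is positive definite if and only if $|u|^2 + |v|^2 + |\tilde v|^2 < 1$. -/
open Matrix
open scoped ComplexOrder

private lemma aux_posdef_two (A : Matrix (Fin 2) (Fin 2) ℂ) (hA : A.IsHermitian) (r D : ℝ)
    (h00 : A 0 0 = (r : ℂ)) (hdet : A.det = (D : ℂ)) :
    A.PosDef ↔ 0 < r ∧ 0 < D := by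
  constructor
  · intro h
    refine ⟨?_, ?_⟩
    · have hx : (![1, 0] : Fin 2 → ℂ) ≠ 0 := by
        intro hh
        have := congrFun hh 0
        simp at this
      have := h.dotProduct_mulVec_pos (x := ![1, 0]) hx
      have hval : dotProduct (star (![1, 0] : Fin 2 → ℂ)) (A *ᵥ ![1, 0]) = (r : ℂ) := by
        simp [dotProduct, mulVec, Fin.sum_univ_two, h00]
      rw [hval] at this
      exact_mod_cast this
    · have := h.det_pos
      rw [hdet] at this
      exact_mod_cast this
  · rintro ⟨hr, hD⟩
    refine Matrix.PosDef.of_dotProduct_mulVec_pos hA fun x hx => ?_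
    set b : ℂ := A 0 1 with hb
    have h10 : A 1 0 = (starRingEnd ℂ) b := by
      have := congrFun (congrFun hA.symm 0) 1
      rw [hb, this, Matrix.conjTranspose_apply, RCLike.star_def, Complex.conj_conj]
    have hdet' : (D : ℂ) = (r : ℂ) * A 1 1 - b * (starRingEnd ℂ) b := by
      rw [← hdet, Matrix.det_fin_two, h00, h10, hb]
    have key : dotProduct (star x) (A *ᵥ x) * (r : ℂ)
        = ((Complex.normSq ((r : ℂ) * x 0 + b * x 1) + D * Complex.normSq (x 1) : ℝ) : ℂ) := by
      push_cast [Complex.normSq_eq_conj_mul_self]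
      simp only [dotProduct, mulVec, Fin.sum_univ_two, Pi.star_apply, h00, h10, ← hb,
        map_add, _root_.map_mul, Complex.conj_ofReal, RCLike.star_def]
      linear_combination (-((starRingEnd ℂ) (x 1)) * x 1) * hdet'
    have hSpos : 0 < Complex.normSq ((r : ℂ) * x 0 + b * x 1) + D * Complex.normSq (x 1) := by
      by_cases hx1 : x 1 = 0
      · have hx0 : x 0 ≠ 0 := by
          intro hx0
          apply hx
          funext i
          fin_cases i <;> simp [hx0, hx1]
        have hrC : (r : ℂ) ≠ 0 := by exact_mod_cast hr.ne'
        rw [hx1]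
        simp only [mul_zero, add_zero, Complex.normSq_zero]
        exact Complex.normSq_pos.mpr (mul_ne_zero hrC hx0)
      · exact add_pos_of_nonneg_of_pos (Complex.normSq_nonneg _)
          (mul_pos hD (Complex.normSq_pos.mpr hx1))
    have hrC : (r : ℂ) ≠ 0 := by exact_mod_cast hr.ne'
    have hQ : dotProduct (star x) (A *ᵥ x)
        = (((Complex.normSq ((r : ℂ) * x 0 + b * x 1) + D * Complex.normSq (x 1)) / r : ℝ) : ℂ) := by
      rw [Complex.ofReal_div, eq_div_iff (by exact_mod_cast hr.ne')]
      exact key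
    rw [hQ]
    exact Complex.zero_lt_real.mpr (div_pos hSpos hr)

theorem mok_embedding_range (u v tv : ℂ) (hu : ‖u‖ < 1) :
    (1 - (!![u, v; tv, tv * v / (1 + u)]) * (!![u, v; tv, tv * v / (1 + u)])ᴴ).PosDef
      ↔ ‖u‖ ^ 2 + ‖v‖ ^ 2 + ‖tv‖ ^ 2 < 1 := by
  have h1u : (1 : ℂ) + u ≠ 0 := by
    intro h
    have : u = -1 := by linear_combination h
    rw [this] at hu
    simp at hu
  have h1u' : (1 : ℂ) + (starRingEnd ℂ) u ≠ 0 := by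
    intro h
    apply h1u
    have := congrArg (starRingEnd ℂ) h
    simpa using this
  have hHerm : (1 - !![u, v; tv, tv * v / (1 + u)] * !![u, v; tv, tv * v / (1 + u)]ᴴ).IsHermitian :=
    Matrix.isHermitian_one.sub (Matrix.isHermitian_mul_conjTranspose_self _)
  have h00 : (1 - !![u, v; tv, tv * v / (1 + u)] * !![u, v; tv, tv * v / (1 + u)]ᴴ) 0 0
      = ((1 - Complex.normSq u - Complex.normSq v : ℝ) : ℂ) := by
    push_cast [Complex.normSq_eq_conj_mul_self]
    simp only [Matrix.sub_apply, Matrix.one_apply, Matrix.mul_apply, Fin.sum_univ_two,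
      Matrix.conjTranspose_apply, Matrix.cons_val', Matrix.cons_val_zero, Matrix.cons_val_one,
      Matrix.head_cons, Matrix.head_fin_const, Matrix.empty_val', Matrix.cons_val_fin_one,
      RCLike.star_def, if_true, Matrix.of_apply]
    ring
  have hdet : (1 - !![u, v; tv, tv * v / (1 + u)] * !![u, v; tv, tv * v / (1 + u)]ᴴ).det
      = ((1 - Complex.normSq u - Complex.normSq v - Complex.normSq tv : ℝ) : ℂ) := by
    push_cast [Complex.normSq_eq_conj_mul_self]
    simp only [Matrix.det_fin_two, Matrix.sub_apply, Matrix.one_apply, Matrix.mul_apply,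
      Fin.sum_univ_two, Matrix.conjTranspose_apply, Matrix.cons_val', Matrix.cons_val_zero,
      Matrix.cons_val_one, Matrix.head_cons, Matrix.head_fin_const, Matrix.empty_val',
      Matrix.cons_val_fin_one, RCLike.star_def, Matrix.of_apply, map_div₀, _root_.map_mul,
      map_add, _root_.map_one, if_true, one_ne_zero, if_false, Fin.one_eq_zero_iff]
    have : ((0:Fin 2) = 1) = False := by simp
    simp only [this, if_false, if_true, eq_self_iff_true]
    field_simp
    ring
  rw [aux_posdef_two _ hHerm _ _ h00 hdet]
  rw [← Complex.sq_norm u, ← Complex.sq_norm v, ← Complex.sq_norm tv]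
  constructor
  · rintro ⟨-, h2⟩
    linarith
  · intro h
    have h3 : 0 ≤ ‖tv‖ ^ 2 := by positivity
    have h4 : 0 ≤ ‖v‖ ^ 2 := by positivity
    constructor <;> linarith
end

section
/- Define $F : \mathbb{C}^2 \to \mathbb{C}^{2\times 2}$ by $F(z_1,z_2) = \begin{pmatrix} 0 & z_1 \\ z_2 & z_1 z_2 \end{pmatrix}$. Then for all $z = (z_1,z_2)$ and $w = (w_1,w_2)$ in $\mathbb{C}^2$, $\det\big(I_2 - F(z) F(w)^*\big) = 1 - z_1\bar{w}_1 - z_2 \bar{w}_2$. -/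
open Matrix ComplexConjugate

theorem nonstandard_isometry_ball2 (z1 z2 w1 w2 : ℂ) :
    (1 - (!![0, z1; z2, z1 * z2]) * (!![0, w1; w2, w1 * w2])ᴴ).det
      = 1 - z1 * conj w1 - z2 * conj w2 := by
  rw [show (!![(0:ℂ), w1; w2, w1 * w2])ᴴ = !![0, conj w2; conj w1, conj (w1*w2)] by
      ext i j; fin_cases i <;> fin_cases j <;> simp,
    Matrix.mul_fin_two, Matrix.one_fin_two]
  simp [Matrix.det_fin_two_of, Matrix.sub_apply]
  ring
end

section
/- Define $F : \mathbb{C} \to \mathbb{C}^{2\times 2}$ by $F(z) = \begin{pmatrix} 0 & z/\sqrt{2} \\ z/\sqrt{2} & z^2/2 \end{pmatrix}$. Then for all $z, w \in \mathbb{C}$, $\det\big(I_2 - F(z) F(w)^*\big) = 1 - z\bar{w}$. -/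
open Matrix ComplexConjugate

theorem nonstandard_isometry_disc (z w : ℂ) :
    (1 - (!![0, z / Real.sqrt 2; z / Real.sqrt 2, z ^ 2 / 2]) *
        (!![0, w / Real.sqrt 2; w / Real.sqrt 2, w ^ 2 / 2])ᴴ).det
      = 1 - z * conj w := by
  have h2 : ((Real.sqrt 2 : ℝ) : ℂ) * ((Real.sqrt 2 : ℝ) : ℂ) = 2 := by
    rw [← Complex.ofReal_mul, Real.mul_self_sqrt (by norm_num)]
    norm_num
  have hne : ((Real.sqrt 2 : ℝ) : ℂ) ≠ 0 := by
    intro h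
    rw [h, mul_zero] at h2
    norm_num at h2
  simp only [conjTranspose, Matrix.map_apply, Matrix.transpose_apply, det_fin_two,
    Matrix.sub_apply, Matrix.mul_apply, Matrix.one_apply, Fin.sum_univ_two,
    Matrix.of_apply, Matrix.cons_val', Matrix.cons_val_zero, Matrix.cons_val_one,
    Matrix.head_cons, Matrix.head_fin_const, Matrix.empty_val', Matrix.cons_val_fin_one]
  try simp only [map_div₀, map_pow, Complex.conj_ofReal, map_zero, map_ofNat]
  field_simp
  ring_nf
  have h2' : ((Real.sqrt 2 : ℝ) : ℂ)^2 = 2 := by rw [sq, h2]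
  have h4 : ((Real.sqrt 2 : ℝ) : ℂ)^4 = 4 := by
    rw [show ((Real.sqrt 2 : ℝ) : ℂ)^4 = (((Real.sqrt 2 : ℝ) : ℂ)^2)^2 by ring, h2']; norm_num
  have h6 : ((Real.sqrt 2 : ℝ) : ℂ)^6 = 8 := by
    rw [show ((Real.sqrt 2 : ℝ) : ℂ)^6 = (((Real.sqrt 2 : ℝ) : ℂ)^2)^3 by ring, h2']; norm_num
  simp [Complex.star_def]; field_simp
  simp only [h2', h4, h6]
  norm_num
  ring
end

section
/- For $z, w \in \mathbb{C}^{d+1}$ define $\Delta(z,w) = 1 - 2\sum_{j} z_j \bar w_j + N(z)\overline{N(w)}$ where $N(z) = \sum_j z_j^2$. For $z_1 \in \mathbb{C}$ with $z_1 \neq -1$ and $z' \in \mathbb{C}^{d-1}$, set $q(z_1,z') = -\frac{\sum_j (z'_j)^2}{1+z_1}$ and define $G(z_1,z') = \big(\tfrac{z_1 + q}{2},\ \tfrac{i(z_1 - q)}{2},\ z'\big) \in \mathbb{C}^{d+1}$. Then for all such $(z_1,z')$ and $(w_1,w')$: $\Delta\big(G(z_1,z'), G(w_1,w')\big) = 1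 - z_1 \bar w_1 - 2\sum_j z'_j \bar w'_j$. -/
open ComplexConjugate

/-- The spin factor determinant `N(z) = ∑ z_j²` on `ℂ^{d+1} = ℂ × ℂ × ℂ^{d-1}`. -/
noncomputable def lieN {m : ℕ} (z : ℂ × ℂ × (Fin m → ℂ)) : ℂ :=
  z.1 ^ 2 + z.2.1 ^ 2 + ∑ j, (z.2.2 j) ^ 2

/-- The quasi-determinant `Δ(z,w) = 1 - 2∑ z_j conj(w_j) + N(z) conj(N(w))` of the spin
factor whose unit ball is the Lie ball. -/
noncomputable def lieDelta {m : ℕ} (z w : ℂ × ℂ × (Fin m → ℂ)) : ℂ :=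
  1 - 2 * (z.1 * conj w.1 + z.2.1 * conj w.2.1 + ∑ j, z.2.2 j * conj (w.2.2 j)) +
    lieN z * conj (lieN w)

/-- The Mok type rational embedding of the unit ball into the Lie ball. -/
noncomputable def mokLie {m : ℕ} (z1 : ℂ) (z' : Fin m → ℂ) : ℂ × ℂ × (Fin m → ℂ) :=
  ((z1 + (-(∑ j, (z' j) ^ 2) / (1 + z1))) / 2,
   Complex.I * (z1 - (-(∑ j, (z' j) ^ 2) / (1 + z1))) / 2, z')

/-- Division-free core identity: with `S = -q(1+z₁)` and `conj T = -r̄(1+w̄₁)`, the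
spin-factor quasi-determinant of the Mok embedding collapses to `1 - z₁w̄₁ - 2A`. -/
lemma mok_key (i q rb A z1 wb : ℂ) (hi : i ^ 2 = -1) :
    1 - 2 * ((z1 + q) / 2 * ((wb + rb) / 2)
        + (i * (z1 - q) / 2) * (-i * (wb - rb) / 2) + A)
      + (((z1 + q) / 2) ^ 2 + (i * (z1 - q) / 2) ^ 2 + (-q * (1 + z1)))
        * (((wb + rb) / 2) ^ 2 + (-i * (wb - rb) / 2) ^ 2 + (-rb * (1 + wb)))
      = 1 - z1 * wb - 2 * A := by
  linear_combination (((z1 - q) * (wb - rb)) ^ 2 / 16 * i ^ 2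
    + ((z1 - q) * (wb - rb) / 2
      + (((z1 + q) ^ 2 / 4 - q * (1 + z1)) * (wb - rb) ^ 2
        + ((wb + rb) ^ 2 / 4 - rb * (1 + wb)) * (z1 - q) ^ 2) / 4
      - ((z1 - q) * (wb - rb)) ^ 2 / 16)) * hi

theorem mok_lie_isometry (d : ℕ) (hd : 2 ≤ d) (z1 w1 : ℂ)
    (z' w' : Fin (d - 1) → ℂ) (hz : z1 ≠ -1) (hw : w1 ≠ -1) :
    lieDelta (mokLie z1 z') (mokLie w1 w')
      = 1 - z1 * conj w1 - 2 * ∑ j, z' j * conj (w' j) := by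
  have hz1 : (1 : ℂ) + z1 ≠ 0 := fun h => hz (by linear_combination h)
  have hw1 : (1 : ℂ) + conj w1 ≠ 0 := by
    intro h
    apply hw
    have h2 := congrArg conj h
    simp only [map_add, map_zero, map_one, Complex.conj_conj] at h2
    linear_combination h2
  simp only [lieDelta, lieN, mokLie, map_add, map_mul, map_div₀, map_sub, map_neg, map_pow,
    map_sum, map_one, map_ofNat, Complex.conj_I]
  set S := ∑ j, z' j ^ 2 with hS
  set Tb := ∑ j, (starRingEnd ℂ) (w' j) ^ 2 with hT
  set A := ∑ j, z' j * (starRingEnd ℂ) (w' j) with hA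
  set wb := (starRingEnd ℂ) w1 with hwb
  set q := -S / (1 + z1) with hq
  set rb := -Tb / (1 + wb) with hr
  have hS' : S = -q * (1 + z1) := by rw [hq]; field_simp
  have hT' : Tb = -rb * (1 + wb) := by rw [hr]; field_simp
  rw [hS', hT']
  linear_combination mok_key Complex.I q rb A z1 wb Complex.I_sq
end

section
/- For $z,w \in \mathbb{C}^{d+1}$ let $\Delta(z,w) = 1 - 2\sum_j z_j\bar w_j + N(z)\overline{N(w)}$ with $N(z) = \sum_j z_j^2$. Let $u, u' \in \mathbb{C}$, $v, v' \in \mathbb{C}^{d-1}$, and suppose $h, h' \in \mathbb{C}$ satisfy $h^2 + 2h = u^2 + 2\sum_j v_j^2$ and $(h')^2 + 2h' = (u')^2 + 2\sum_j (v'_j)^2$. Define $F = \big(u/\sqrt2,\ -i h/\sqrt2,\ v\big)$ and $F' = \big(u'/\sqrt2,\ -i h'/\sqrt2,\ v'\big)$ in $\mathbb{C}^{d+1}$. Then $\Delta(F, F') = 1 - u\bar u' - 2\sum_j v_j \bar v'_j$. -/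
open ComplexConjugate

lemma lieN_aux {m : ℕ} (u h : ℂ) (v : Fin m → ℂ)
    (hh : h ^ 2 + 2 * h = u ^ 2 + 2 * ∑ j, (v j) ^ 2) :
    lieN ((u / Real.sqrt 2, -Complex.I * h / Real.sqrt 2, v) : ℂ × ℂ × (Fin m → ℂ)) = h := by
  have hs : ((Real.sqrt 2 : ℂ)) ^ 2 = 2 := by
    rw [← Complex.ofReal_pow, Real.sq_sqrt (by norm_num)]
    norm_num
  have hs0 : ((Real.sqrt 2 : ℂ)) ≠ 0 := by
    intro h0
    rw [h0] at hs; simp at hs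
  simp only [lieN]
  field_simp
  linear_combination -hh + h^2*Complex.I_sq + ((∑ j, (v j)^2) - h) * hs

theorem irrational_lie_isometry (d : ℕ) (hd : 2 ≤ d) (u u' h h' : ℂ)
    (v v' : Fin (d - 1) → ℂ)
    (hh : h ^ 2 + 2 * h = u ^ 2 + 2 * ∑ j, (v j) ^ 2)
    (hh' : h' ^ 2 + 2 * h' = u' ^ 2 + 2 * ∑ j, (v' j) ^ 2) :
    lieDelta (u / Real.sqrt 2, -Complex.I * h / Real.sqrt 2, v)
        (u' / Real.sqrt 2, -Complex.I * h' / Real.sqrt 2, v')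
      = 1 - u * conj u' - 2 * ∑ j, v j * conj (v' j) := by
  have hs : ((Real.sqrt 2 : ℂ)) ^ 2 = 2 := by
    rw [← Complex.ofReal_pow, Real.sq_sqrt (by norm_num)]
    norm_num
  have hs0 : ((Real.sqrt 2 : ℂ)) ≠ 0 := by
    intro h0
    rw [h0] at hs; simp at hs
  rw [lieDelta, lieN_aux u h v hh, lieN_aux u' h' v' hh']
  simp only [map_div₀, map_mul, map_neg, Complex.conj_I, Complex.conj_ofReal]
  field_simp
  ring_nf
  linear_combination 2 * h * conj h' * Complex.I_sq + (h * conj h' + u * conj u') * hs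
end
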